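/- Let a, c, d be complex numbers satisfying: |c|² + |d|² < 1; |a|²(1+|c|²) + 2Re(a²·conj(c)) < (1−|c|²)² − (1−|c|²)|d|²; and Re(a²·conj(c)) ≥ −|a|²|c|². Then every complex root of the polynomial z⁴ + p₁z³ + p₂z² + p₃z + p₄, where p₁ = −|a|², p₂ = −2|c|² − |d|² − 2Re(a²·conj(c)), p₃ = −|a|²|c|², p₄ = |c|²(|c|²+|d|²), has modulus strictly less than 1. -/

import Mathlib

open ComplexConjugate

set_option maxHeartbeats 1000000 in
lemma aux_stmt9 (A C D R x y : ℝ) (hA0 : 0 ≤ A) (hC0 : 0 ≤ C) (hD0 : 0 ≤ D)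
    (hT1 : C + D < 1)
    (h2 : A*(1+C) + 2*R < (1-C)^2 - (1-C)*D)
    (h3 : -(A*C) ≤ R)
    (hR2 : R^2 ≤ A^2*C)
    (hρ1 : 1 ≤ x^2 + y^2)
    (hre : x^4 - 6*x^2*y^2 + y^4 - A*(x^3 - 3*x*y^2) - (2*C+D+2*R)*(x^2-y^2) - A*C*x + C*(C+D) = 0)
    (him : 4*x^3*y - 4*x*y^3 - A*(3*x^2*y - y^3) - (2*C+D+2*R)*(2*x*y) - A*C*y = 0) :
    False := by
  have hC1 : C < 1 := by linarith
  have hA1 : A < 1 := by nlinarith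
  have hA2 : A < 1 - (C+D) := by nlinarith [hC1, h2, h3]
  have hCD1 : C*(C+D) ≤ C+D := by nlinarith
  obtain ⟨ρ, hρd⟩ : ∃ ρ : ℝ, ρ = x^2 + y^2 := ⟨_, rfl⟩
  rw [← hρd] at hρ1
  have hs : 0 < ρ^2 - C*(C+D) := by nlinarith
  have hρC : 0 < ρ - C := by linarith
  by_cases hy0 : y = 0
  · subst hy0
    have hrex : x^4 - A*x^3 - (2*C+D+2*R)*x^2 - A*C*x + C*(C+D) = 0 := by
      linear_combination hre
    have hx2 : 1 ≤ x^2 := by nlinarith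
    rcases le_or_gt 0 x with hxp | hxn
    · have hx1 : 1 ≤ x := by nlinarith
      have hg : 0 ≤ (x - 1) * (x^3 + (1-A)*x^2 + C*(A-(C+D))*x - C*(C+D)) := by
        apply mul_nonneg (by linarith)
        have k1 : 0 ≤ (1-A)*(x^2-1) := mul_nonneg (by linarith) (by linarith)
        have k2 : 0 ≤ C*A*x := mul_nonneg (mul_nonneg hC0 hA0) (by linarith)
        have k3 : 0 ≤ x*(x^2-1) := mul_nonneg (by linarith) (by linarith)
        have k5 : 0 ≤ x*(1-C*(C+D)) := mul_nonneg (by linarith) (by linarith)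
        nlinarith [k1, k2, k3, k5]
      have h5 : 0 < ((1-C)^2 - (1-C)*D - (A*(1+C)+2*R)) * x^2 := by
        apply mul_pos (by linarith) (by nlinarith)
      nlinarith [hrex, hg, h5]
    · have hx1 : x ≤ -1 := by nlinarith
      have h6 : 0 ≤ (-(A*x))*(x^2+C) := by
        apply mul_nonneg (by nlinarith [mul_nonneg hA0 (show (0:ℝ) ≤ -x by linarith)])
        nlinarith
      have hq : 0 ≤ (-(A*x))*(x^2+C) - 2*R*x^2 := by
        rcases le_or_gt R 0 with hRn | hRp
        · have h7 : 0 ≤ (-2*R)*x^2 := mul_nonneg (by linarith) (sq_nonneg x)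
          nlinarith [h6, h7]
        · have hT0 : 0 < 2*R*x^2 := by positivity
          have hS2 : (2*R*x^2)^2 ≤ ((-(A*x))*(x^2+C))^2 := by
            nlinarith [mul_le_mul_of_nonneg_right hR2 (by positivity : (0:ℝ) ≤ 4*x^4),
              mul_nonneg (mul_nonneg (sq_nonneg A) (sq_nonneg x)) (sq_nonneg (x^2-C))]
          nlinarith [hS2, h6, hT0]
      have h8 : 0 < (x^2-C)*(x^2-(C+D)) := mul_pos (by nlinarith) (by nlinarith)
      nlinarith [hrex, hq, h8]
  · have himW : y * (2*x*(ρ^2 - C*(C+D)) - A*ρ*(ρ-C)) = 0 := by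
      rw [hρd]; linear_combination (x^2 - y^2) * him - 2*x*y * hre
    have hI : 2*x*(ρ^2 - C*(C+D)) = A*ρ*(ρ-C) := by
      rcases mul_eq_zero.mp himW with h | h
      · exact absurd h hy0
      · linarith
    have hreW : (2*x^2 - ρ)*(ρ^2 + C*(C+D)) = A*ρ^2*x + (2*C+D+2*R)*ρ^2 + A*C*ρ*x := by
      rw [hρd]; linear_combination (x^2 - y^2) * hre + 2*x*y * him
    have hx0 : 0 ≤ x := by
      by_contra hneg
      push_neg at hneg
      nlinarith [hI, mul_nonneg (mul_nonneg hA0 (by linarith : (0:ℝ) ≤ ρ)) hρC.le,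
        mul_pos hs (show (0:ℝ) < -x by linarith)]
    have hIsq : 4*x^2*(ρ^2 - C*(C+D))^2 = A^2*ρ^2*(ρ-C)^2 := by
      linear_combination (2*x*(ρ^2 - C*(C+D)) + A*ρ*(ρ-C)) * hI
    have c1 : 0 ≤ A*ρ*x*(ρ+C) :=
      mul_nonneg (mul_nonneg (mul_nonneg hA0 (by linarith)) hx0) (by linarith)
    have c2 : 0 ≤ 2*C+D+2*R := by
      have : 0 ≤ C*(1-A) := mul_nonneg hC0 (by linarith)
      nlinarith [h3, this]
    have c3 : A^2*ρ^2*(ρ-C)^2 < 2*ρ*(ρ^2 - C*(C+D))^2 := by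
      have hX : 0 < ρ*(ρ-C) := mul_pos (by linarith) hρC
      have m2 : ρ*(ρ-C) ≤ ρ^2 - C*(C+D) := by nlinarith
      have m2sq : (ρ*(ρ-C))^2 ≤ (ρ^2 - C*(C+D))^2 := by
        exact pow_le_pow_left₀ hX.le m2 2
      have hA2sq : A^2 < 1 := by nlinarith
      have w1 : 0 < (1-A^2)*(ρ*(ρ-C))^2 := mul_pos (by linarith) (by positivity)
      have w2 : 0 ≤ (2*ρ-2)*(ρ^2 - C*(C+D))^2 := mul_nonneg (by linarith) (sq_nonneg _)
      linarith [w1, w2, m2sq, sq_nonneg (ρ^2 - C*(C+D))]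
    have hpos : 0 < ρ^2 + C*(C+D) := by nlinarith
    have step := mul_lt_mul_of_pos_right c3 hpos
    have t1 : 0 ≤ (ρ^2 - C*(C+D))^2 * (A*ρ*x*(ρ+C)) := mul_nonneg (sq_nonneg _) c1
    have t2 : 0 ≤ (ρ^2 - C*(C+D))^2 * ((2*C+D+2*R)*ρ^2) :=
      mul_nonneg (sq_nonneg _) (mul_nonneg c2 (sq_nonneg ρ))
    have hbig : A^2*ρ^2*(ρ-C)^2*(ρ^2 + C*(C+D))
        = 2*(ρ^2 - C*(C+D))^2*(ρ*(ρ^2 + C*(C+D)) + A*ρ*x*(ρ+C) + (2*C+D+2*R)*ρ^2) := by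
      linear_combination (-(ρ^2 + C*(C+D))) * hIsq + 2*(ρ^2 - C*(C+D))^2 * hreW
    linarith [hbig, step, t1, t2]

/-- Asymptotic mean-square stability in the hereditary case (`b = 0`):
under the stated conditions all roots of the characteristic polynomial lie strictly
inside the unit disk. -/
theorem stmt_9 (a c d : ℂ)
    (h₁ : ‖c‖ ^ 2 + ‖d‖ ^ 2 < 1)
    (h₂ : ‖a‖ ^ 2 * (1 + ‖c‖ ^ 2) + 2 * (a ^ 2 * conj c).re
        < (1 - ‖c‖ ^ 2) ^ 2 - (1 - ‖c‖ ^ 2) * ‖d‖ ^ 2)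
    (h₃ : (a ^ 2 * conj c).re ≥ -(‖a‖ ^ 2 * ‖c‖ ^ 2))
    (p₁ p₂ p₃ p₄ : ℝ)
    (hp₁ : p₁ = -‖a‖ ^ 2)
    (hp₂ : p₂ = -2 * ‖c‖ ^ 2 - ‖d‖ ^ 2 - 2 * (a ^ 2 * conj c).re)
    (hp₃ : p₃ = -(‖a‖ ^ 2 * ‖c‖ ^ 2))
    (hp₄ : p₄ = ‖c‖ ^ 2 * (‖c‖ ^ 2 + ‖d‖ ^ 2)) :
    ∀ z : ℂ, z ^ 4 + (p₁ : ℂ) * z ^ 3 + (p₂ : ℂ) * z ^ 2 + (p₃ : ℂ) * z + (p₄ : ℂ) = 0 →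
      ‖z‖ < 1 := by
  intro z hz
  by_contra hlt
  push_neg at hlt
  subst hp₁ hp₂ hp₃ hp₄
  obtain ⟨R, hR⟩ : ∃ R : ℝ, R = (a ^ 2 * conj c).re := ⟨_, rfl⟩
  rw [← hR] at hz h₂ h₃
  have hre := congrArg Complex.re hz
  have him := congrArg Complex.im hz
  simp only [Complex.add_re, Complex.add_im, Complex.mul_re, Complex.mul_im,
    Complex.ofReal_re, Complex.ofReal_im, Complex.zero_re, Complex.zero_im,
    pow_succ, pow_zero, one_mul, Complex.one_re, Complex.one_im] at hre him
  have hR2 : R^2 ≤ (‖a‖ ^ 2)^2 * ‖c‖ ^ 2 := by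
    have h := Complex.abs_re_le_norm (a ^ 2 * conj c)
    rw [norm_mul, norm_pow, Complex.norm_conj, ← hR] at h
    have h0 := abs_nonneg R
    nlinarith [norm_nonneg c, norm_nonneg a, sq_abs R]
  have hρ1 : 1 ≤ z.re^2 + z.im^2 := by
    have h1 : ‖z‖ ^ 2 = z.re^2 + z.im^2 := by
      rw [Complex.sq_norm, Complex.normSq_apply]; ring
    nlinarith [norm_nonneg z]
  exact aux_stmt9 (‖a‖ ^ 2) (‖c‖ ^ 2) (‖d‖ ^ 2)
    R z.re z.im
    (by positivity) (by positivity) (by positivity) h₁ (by linarith) (by linarith) hR2 hρ1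
    (by linear_combination hre) (by linear_combination him)
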